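/- arXiv:2401.02024 — 7 statements merged into one kernel-verified Lean document; each statement's English description precedes it below -/
import Mathlib

section
/- Let ε ∈ ℝ. Let ρ, σ : ℝ → ℝ be twice continuously differentiable with compact support and let u, v : ℝ → ℝ be twice continuously differentiable. Then ∫_ℝ [(−ε ρ''(x) − (ρ u')'(x)) − (−(σ v')'(x))] · (u(x) − v(x)) dx + ∫_ℝ (ρ(x) − σ(x)) · [(ε u''(x) − (1/2) u'(x)² + ρ(x)) − (−(1/2) v'(x)² + σ(x))] dx = ∫_ℝ [(ρ(x) − σ(x))² + ((ρ(x) + σ(x))/2) (u'(x) − v'(x))²] dx + ε ∫_ℝ (ρ(x) v''(x) − σ(x) u''(x)) dx. -/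
open MeasureTheory

lemma integral_deriv_eq_zero' (f : ℝ → ℝ) (hf : ContDiff ℝ 1 f) (hfc : HasCompactSupport f) :
    ∫ x : ℝ, deriv f x = 0 := by
  have hint : Integrable (deriv f) :=
    (hf.continuous_deriv le_rfl).integrable_of_hasCompactSupport hfc.deriv
  rw [← intervalIntegral.integral_Iic_add_Ioi (b := 0) hint.integrableOn hint.integrableOn,
    hfc.integral_Iic_deriv_eq hf 0, hfc.integral_Ioi_deriv_eq hf 0]
  ring

lemma deriv_eq_zero_outside {f : ℝ → ℝ} {s : Set ℝ} (hs : IsClosed s)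
    (h : Function.support f ⊆ s) {x : ℝ} (hx : x ∉ s) : deriv f x = 0 := by
  by_contra hne
  exact hx ((closure_minimal h hs) (support_deriv_subset (Function.mem_support.mpr hne)))

/-- Mean field games duality identity comparing the viscous MFG system with the
first-order system, at a fixed time. -/
theorem mfg_duality_identity (ε : ℝ) (ρ σ u v : ℝ → ℝ)
    (hρ : ContDiff ℝ 2 ρ) (hρc : HasCompactSupport ρ)
    (hσ : ContDiff ℝ 2 σ) (hσc : HasCompactSupport σ)
    (hu : ContDiff ℝ 2 u) (hv : ContDiff ℝ 2 v) :
    (∫ x : ℝ, ((-ε * deriv (deriv ρ) x - deriv (fun y => ρ y * deriv u y) x)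
        - (-(deriv (fun y => σ y * deriv v y) x))) * (u x - v x))
      + (∫ x : ℝ, (ρ x - σ x) *
          ((ε * deriv (deriv u) x - (1/2) * (deriv u x)^2 + ρ x)
            - (-(1/2) * (deriv v x)^2 + σ x)))
    = (∫ x : ℝ, ((ρ x - σ x)^2 + ((ρ x + σ x)/2) * (deriv u x - deriv v x)^2))
      + ε * ∫ x : ℝ, (ρ x * deriv (deriv v) x - σ x * deriv (deriv u) x) := by
  have h2 : (1 : WithTop ℕ∞) ≤ 2 := one_le_two
  have hu1 : ContDiff ℝ 1 (deriv u) := (contDiff_succ_iff_deriv.mp (hu.of_le (by norm_num))).2.2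
  have hv1 : ContDiff ℝ 1 (deriv v) := (contDiff_succ_iff_deriv.mp (hv.of_le (by norm_num))).2.2
  have hρ1 : ContDiff ℝ 1 (deriv ρ) := (contDiff_succ_iff_deriv.mp (hρ.of_le (by norm_num))).2.2
  have hσ1 : ContDiff ℝ 1 (deriv σ) := (contDiff_succ_iff_deriv.mp (hσ.of_le (by norm_num))).2.2
  -- pointwise derivatives
  have Hρ : ∀ x : ℝ, HasDerivAt ρ (deriv ρ x) x :=
    fun x => (hρ.differentiable two_ne_zero x).hasDerivAt
  have Hσ : ∀ x : ℝ, HasDerivAt σ (deriv σ x) x :=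
    fun x => (hσ.differentiable two_ne_zero x).hasDerivAt
  have Hu : ∀ x : ℝ, HasDerivAt u (deriv u x) x :=
    fun x => (hu.differentiable two_ne_zero x).hasDerivAt
  have Hv : ∀ x : ℝ, HasDerivAt v (deriv v x) x :=
    fun x => (hv.differentiable two_ne_zero x).hasDerivAt
  have Hρ' : ∀ x : ℝ, HasDerivAt (deriv ρ) (deriv (deriv ρ) x) x :=
    fun x => (hρ1.differentiable one_ne_zero x).hasDerivAt
  have Hu' : ∀ x : ℝ, HasDerivAt (deriv u) (deriv (deriv u) x) x :=
    fun x => (hu1.differentiable one_ne_zero x).hasDerivAt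
  have Hv' : ∀ x : ℝ, HasDerivAt (deriv v) (deriv (deriv v) x) x :=
    fun x => (hv1.differentiable one_ne_zero x).hasDerivAt
  have hP : ∀ x : ℝ, deriv (fun y => ρ y * deriv u y) x
      = deriv ρ x * deriv u x + ρ x * deriv (deriv u) x :=
    fun x => ((Hρ x).mul (Hu' x)).deriv
  have hQ : ∀ x : ℝ, deriv (fun y => σ y * deriv v y) x
      = deriv σ x * deriv v x + σ x * deriv (deriv v) x :=
    fun x => ((Hσ x).mul (Hv' x)).deriv
  -- the auxiliary function whose derivative absorbs the difference
  set H : ℝ → ℝ := fun y =>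
    ε * (ρ y * (deriv u y - deriv v y) - deriv ρ y * (u y - v y))
      - ρ y * deriv u y * (u y - v y) + σ y * deriv v y * (u y - v y) with hHdef
  have hH : ∀ x : ℝ, HasDerivAt H
      (ε * ((deriv ρ x * (deriv u x - deriv v x)
            + ρ x * (deriv (deriv u) x - deriv (deriv v) x))
          - (deriv (deriv ρ) x * (u x - v x) + deriv ρ x * (deriv u x - deriv v x)))
        - ((deriv ρ x * deriv u x + ρ x * deriv (deriv u) x) * (u x - v x)
            + ρ x * deriv u x * (deriv u x - deriv v x))
        + ((deriv σ x * deriv v x + σ x * deriv (deriv v) x) * (u x - v x)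
            + σ x * deriv v x * (deriv u x - deriv v x))) x := by
    intro x
    exact (((((Hρ x).mul ((Hu' x).sub (Hv' x))).sub
        ((Hρ' x).mul ((Hu x).sub (Hv x)))).const_mul ε).sub
        ((((Hρ x).mul (Hu' x))).mul ((Hu x).sub (Hv x)))).add
        ((((Hσ x).mul (Hv' x))).mul ((Hu x).sub (Hv x)))
  have cw : ContDiff ℝ 1 (fun y => u y - v y) := (hu.of_le h2).sub (hv.of_le h2)
  have hH1 : ContDiff ℝ 1 H :=
    ((contDiff_const.mul (((hρ.of_le h2).mul (hu1.sub hv1)).sub (hρ1.mul cw))).sub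
        (((hρ.of_le h2).mul hu1).mul cw)).add (((hσ.of_le h2).mul hv1).mul cw)
  -- compact support bookkeeping
  set K : Set ℝ := tsupport ρ ∪ tsupport σ with hKdef
  have hKcl : IsClosed K := (isClosed_tsupport ρ).union (isClosed_tsupport σ)
  have hK : IsCompact K := hρc.union hσc
  have sρ : Function.support ρ ⊆ K := (subset_tsupport ρ).trans Set.subset_union_left
  have sσ : Function.support σ ⊆ K := (subset_tsupport σ).trans Set.subset_union_right
  have sρ' : Function.support (deriv ρ) ⊆ K :=
    support_deriv_subset.trans Set.subset_union_left
  have sσ' : Function.support (deriv σ) ⊆ K :=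
    support_deriv_subset.trans Set.subset_union_right
  have sP : Function.support (fun y => ρ y * deriv u y) ⊆ K := by
    intro x hxm
    apply sρ
    simp only [Function.mem_support] at hxm ⊢
    exact fun h0 => hxm (by rw [h0, zero_mul])
  have sQ : Function.support (fun y => σ y * deriv v y) ⊆ K := by
    intro x hxm
    apply sσ
    simp only [Function.mem_support] at hxm ⊢
    exact fun h0 => hxm (by rw [h0, zero_mul])
  have zρ : ∀ x ∉ K, ρ x = 0 := fun x hx => Function.notMem_support.mp fun h => hx (sρ h)
  have zσ : ∀ x ∉ K, σ x = 0 := fun x hx => Function.notMem_support.mp fun h => hx (sσ h)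
  have zρ' : ∀ x ∉ K, deriv ρ x = 0 := fun x hx => Function.notMem_support.mp fun h => hx (sρ' h)
  have zσ' : ∀ x ∉ K, deriv σ x = 0 := fun x hx => Function.notMem_support.mp fun h => hx (sσ' h)
  have zρ'' : ∀ x ∉ K, deriv (deriv ρ) x = 0 := fun x hx => deriv_eq_zero_outside hKcl sρ' hx
  have zP : ∀ x ∉ K, deriv (fun y => ρ y * deriv u y) x = 0 :=
    fun x hx => deriv_eq_zero_outside hKcl sP hx
  have zQ : ∀ x ∉ K, deriv (fun y => σ y * deriv v y) x = 0 :=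
    fun x hx => deriv_eq_zero_outside hKcl sQ hx
  have hHc : HasCompactSupport H := HasCompactSupport.intro hK fun x hx => by
    simp only [hHdef, zρ x hx, zσ x hx, zρ' x hx]; ring
  -- continuity facts
  have cρ : Continuous ρ := hρ.continuous
  have cσ : Continuous σ := hσ.continuous
  have cu : Continuous u := hu.continuous
  have cv : Continuous v := hv.continuous
  have cρ'' : Continuous (deriv (deriv ρ)) := hρ1.continuous_deriv le_rfl
  have cu' : Continuous (deriv u) := hu1.continuous
  have cv' : Continuous (deriv v) := hv1.continuous
  have cu'' : Continuous (deriv (deriv u)) := hu1.continuous_deriv le_rfl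
  have cv'' : Continuous (deriv (deriv v)) := hv1.continuous_deriv le_rfl
  have cP' : Continuous (deriv (fun y => ρ y * deriv u y)) :=
    ((hρ.of_le h2).mul hu1).continuous_deriv le_rfl
  have cQ' : Continuous (deriv (fun y => σ y * deriv v y)) :=
    ((hσ.of_le h2).mul hv1).continuous_deriv le_rfl
  -- the four integrands
  set i1 : ℝ → ℝ := fun x => ((-ε * deriv (deriv ρ) x - deriv (fun y => ρ y * deriv u y) x)
      - (-(deriv (fun y => σ y * deriv v y) x))) * (u x - v x) with hi1
  set i2 : ℝ → ℝ := fun x => (ρ x - σ x) *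
      ((ε * deriv (deriv u) x - (1/2) * (deriv u x)^2 + ρ x)
        - (-(1/2) * (deriv v x)^2 + σ x)) with hi2
  set i3 : ℝ → ℝ := fun x =>
      ((ρ x - σ x)^2 + ((ρ x + σ x)/2) * (deriv u x - deriv v x)^2) with hi3
  set i4 : ℝ → ℝ := fun x =>
      (ρ x * deriv (deriv v) x - σ x * deriv (deriv u) x) with hi4
  have int1 : Integrable i1 := by
    refine (Continuous.integrable_of_hasCompactSupport ?_
      (HasCompactSupport.intro hK fun x hx => ?_))
    · exact (((continuous_const.mul cρ'').sub cP').sub cQ'.neg).mul (cu.sub cv)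
    · simp only [hi1, zρ'' x hx, zP x hx, zQ x hx]; ring
  have int2 : Integrable i2 := by
    refine (Continuous.integrable_of_hasCompactSupport ?_
      (HasCompactSupport.intro hK fun x hx => ?_))
    · exact (cρ.sub cσ).mul ((((continuous_const.mul cu'').sub
        (continuous_const.mul (cu'.pow 2))).add cρ).sub
        ((continuous_const.mul (cv'.pow 2)).add cσ))
    · simp only [hi2, zρ x hx, zσ x hx]; ring
  have int3 : Integrable i3 := by
    refine (Continuous.integrable_of_hasCompactSupport ?_
      (HasCompactSupport.intro hK fun x hx => ?_))
    · exact ((cρ.sub cσ).pow 2).add (((cρ.add cσ).div_const 2).mul ((cu'.sub cv').pow 2))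
    · simp only [hi3, zρ x hx, zσ x hx]; ring
  have int4 : Integrable i4 := by
    refine (Continuous.integrable_of_hasCompactSupport ?_
      (HasCompactSupport.intro hK fun x hx => ?_))
    · exact (cρ.mul cv'').sub (cσ.mul cu'')
    · simp only [hi4, zρ x hx, zσ x hx]; ring
  -- the pointwise identity
  have key : (fun x : ℝ => i1 x + i2 x - (i3 x + ε * i4 x)) = fun x => deriv H x := by
    funext x
    rw [(hH x).deriv]
    simp only [hi1, hi2, hi3, hi4, hP x, hQ x]
    ring
  have hzero : ∫ x : ℝ, (i1 x + i2 x - (i3 x + ε * i4 x)) = 0 := by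
    rw [key]
    exact integral_deriv_eq_zero' H hH1 hHc
  have esplit : ∫ x : ℝ, (i1 x + i2 x - (i3 x + ε * i4 x))
      = ((∫ x : ℝ, i1 x) + ∫ x : ℝ, i2 x) - ((∫ x : ℝ, i3 x) + ε * ∫ x : ℝ, i4 x) := by
    have ia : Integrable (fun x : ℝ => i1 x + i2 x) := int1.add int2
    have ib : Integrable (fun x : ℝ => i3 x + ε * i4 x) := int3.add (int4.const_mul ε)
    rw [integral_sub ia ib,
      integral_add int1 int2, integral_add int3 (int4.const_mul ε), integral_const_mul]
  linarith [hzero, esplit]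
end

section
/- Let ε ∈ ℝ, let ρ : ℝ → ℝ be three times continuously differentiable with compact support, and let u : ℝ → ℝ be three times continuously differentiable. Then ∫_ℝ (−ε ρ'' − (ρ u')')'(x) · u'(x) dx + ∫_ℝ ρ'(x) · (ε u'' − (1/2)(u')² + ρ)'(x) dx = ∫_ℝ [ρ'(x)² + ρ(x) u''(x)²] dx. -/
open MeasureTheory

private lemma integral_deriv_eq_zero_of_compact (f : ℝ → ℝ) (hf : ContDiff ℝ 1 f)
    (hc : HasCompactSupport f) : (∫ x : ℝ, deriv f x) = 0 := by
  have hint : Integrable (deriv f) := (hf.continuous_deriv le_rfl).integrable_of_hasCompactSupport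
    hc.deriv
  have h1 := hc.integral_Iic_deriv_eq hf 0
  have h2 := hc.integral_Ioi_deriv_eq hf 0
  have := intervalIntegral.integral_Iic_add_Ioi (μ := volume) (b := (0:ℝ))
    hint.integrableOn hint.integrableOn
  rw [h1, h2] at this
  simpa using this.symm

private lemma ibp (f g : ℝ → ℝ) (hf : ContDiff ℝ 1 f) (hg : ContDiff ℝ 1 g)
    (hc : HasCompactSupport f) :
    (∫ x : ℝ, deriv f x * g x) = - ∫ x : ℝ, f x * deriv g x := by
  have hfd : Differentiable ℝ f := hf.differentiable one_ne_zero
  have hgd : Differentiable ℝ g := hg.differentiable one_ne_zero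
  have hprod : HasCompactSupport (fun x => f x * g x) := hc.mul_right
  have hprod1 : ContDiff ℝ 1 (fun x => f x * g x) := hf.mul hg
  have hz := integral_deriv_eq_zero_of_compact _ hprod1 hprod
  have hptw : ∀ x : ℝ, deriv (fun x => f x * g x) x = deriv f x * g x + f x * deriv g x :=
    fun x => deriv_fun_mul (hfd x) (hgd x)
  rw [show (fun x => deriv (fun x => f x * g x) x)
      = fun x => deriv f x * g x + f x * deriv g x from funext hptw] at hz
  have hint1 : Integrable (fun x => deriv f x * g x) :=
    ((hf.continuous_deriv le_rfl).mul hg.continuous).integrable_of_hasCompactSupport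
      (hc.deriv.mul_right)
  have hint2 : Integrable (fun x => f x * deriv g x) :=
    (hf.continuous.mul (hg.continuous_deriv le_rfl)).integrable_of_hasCompactSupport
      hc.mul_right
  rw [integral_add hint1 hint2] at hz
  linarith

/-- Static form of the identity
`d/dt ∫ ∂ₓρ ∂ₓu dx = ∫ (∂ₓρ)² + ρ (∂ₓ²u)² dx` for the viscous MFG system. -/
theorem mfg_derivative_identity (ε : ℝ) (ρ u : ℝ → ℝ)
    (hρ : ContDiff ℝ 3 ρ) (hρc : HasCompactSupport ρ)
    (hu : ContDiff ℝ 3 u) :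
    (∫ x : ℝ, deriv (fun y => -ε * deriv (deriv ρ) y
        - deriv (fun z => ρ z * deriv u z) y) x * deriv u x)
      + (∫ x : ℝ, deriv ρ x * deriv (fun y => ε * deriv (deriv u) y
          - (1/2) * (deriv u y)^2 + ρ y) x)
    = ∫ x : ℝ, ((deriv ρ x)^2 + ρ x * (deriv (deriv u) x)^2) := by
  -- smoothness of iterated derivatives
  have h3eq : (3 : WithTop ℕ∞) = 2 + 1 := by norm_num
  have h2eq : (2 : WithTop ℕ∞) = 1 + 1 := by norm_num
  have ρd1 : ContDiff ℝ 2 (deriv ρ) := (contDiff_succ_iff_deriv.mp (h3eq ▸ hρ)).2.2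
  have ρd2 : ContDiff ℝ 1 (deriv (deriv ρ)) := (contDiff_succ_iff_deriv.mp (h2eq ▸ ρd1)).2.2
  have ud1 : ContDiff ℝ 2 (deriv u) := (contDiff_succ_iff_deriv.mp (h3eq ▸ hu)).2.2
  have ud2 : ContDiff ℝ 1 (deriv (deriv u)) := (contDiff_succ_iff_deriv.mp (h2eq ▸ ud1)).2.2
  -- continuity facts
  have cρ : Continuous ρ := hρ.continuous
  have cρ1 : Continuous (deriv ρ) := ρd1.continuous
  have cρ2 : Continuous (deriv (deriv ρ)) := ρd2.continuous
  have cu1 : Continuous (deriv u) := ud1.continuous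
  have cu2 : Continuous (deriv (deriv u)) := ud2.continuous
  have cu3 : Continuous (deriv (deriv (deriv u))) := ud2.continuous_deriv le_rfl
  -- integrability of the basic products
  have int1 : Integrable (fun x => deriv ρ x * deriv (deriv (deriv u)) x) :=
    (cρ1.mul cu3).integrable_of_hasCompactSupport hρc.deriv.mul_right
  have int2 : Integrable (fun x => deriv ρ x * deriv u x * deriv (deriv u) x) :=
    ((cρ1.mul cu1).mul cu2).integrable_of_hasCompactSupport (hρc.deriv.mul_right.mul_right)
  have int3 : Integrable (fun x => ρ x * (deriv (deriv u) x)^2) :=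
    (cρ.mul (cu2.pow 2)).integrable_of_hasCompactSupport hρc.mul_right
  have int4 : Integrable (fun x => (deriv ρ x)^2) :=
    (cρ1.pow 2).integrable_of_hasCompactSupport (by simpa [pow_two] using hρc.deriv.mul_right)
  -- splitting lemma
  have split : ∀ (a b : ℝ) (f g h : ℝ → ℝ), Integrable f → Integrable g → Integrable h →
      (∫ x : ℝ, (a * f x + b * g x + h x))
        = a * (∫ x : ℝ, f x) + b * (∫ x : ℝ, g x) + ∫ x : ℝ, h x := by
    intro a b f g h hf hg hh
    have hfg : Integrable (fun x => a * f x + b * g x) :=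
      (hf.const_mul a).add (hg.const_mul b)
    rw [integral_add hfg hh, integral_add (hf.const_mul a) (hg.const_mul b),
        integral_const_mul, integral_const_mul]
  -- the function inside the first integral
  set F : ℝ → ℝ := fun y => -ε * deriv (deriv ρ) y - deriv (fun z => ρ z * deriv u z) y with hF
  have hρu1 : ContDiff ℝ 2 (fun z => ρ z * deriv u z) := (hρ.of_le (by norm_num)).mul ud1
  have hF1 : ContDiff ℝ 1 F :=
    (contDiff_const.mul ρd2).sub (contDiff_succ_iff_deriv.mp (h2eq ▸ hρu1)).2.2
  have hρuc : HasCompactSupport (fun z => ρ z * deriv u z) := hρc.mul_right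
  have hFc : HasCompactSupport F :=
    HasCompactSupport.comp₂_left (HasCompactSupport.mul_left hρc.deriv.deriv) hρuc.deriv
      (sub_zero (0:ℝ))
  -- integration by parts on the first integral
  have hA : (∫ x : ℝ, deriv F x * deriv u x) = - ∫ x : ℝ, F x * deriv (deriv u) x :=
    ibp F (deriv u) hF1 (ud1.of_le one_le_two) hFc
  -- expand F pointwise
  have hmul : ∀ x : ℝ, deriv (fun z => ρ z * deriv u z) x
      = deriv ρ x * deriv u x + ρ x * deriv (deriv u) x :=
    fun x => deriv_fun_mul ((hρ.differentiable (by norm_num)) x) ((ud1.differentiable two_ne_zero) x)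
  have hA2 : (- ∫ x : ℝ, F x * deriv (deriv u) x)
      = ∫ x : ℝ, (ε * (deriv (deriv ρ) x * deriv (deriv u) x)
          + (1:ℝ) * (deriv ρ x * deriv u x * deriv (deriv u) x)
          + ρ x * (deriv (deriv u) x)^2) := by
    rw [← integral_neg]
    congr 1
    funext x
    simp only [hF, hmul x]
    ring
  have intA : Integrable (fun x => deriv (deriv ρ) x * deriv (deriv u) x) :=
    (cρ2.mul cu2).integrable_of_hasCompactSupport hρc.deriv.deriv.mul_right
  have hA3 : (∫ x : ℝ, (ε * (deriv (deriv ρ) x * deriv (deriv u) x)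
          + (1:ℝ) * (deriv ρ x * deriv u x * deriv (deriv u) x)
          + ρ x * (deriv (deriv u) x)^2))
      = ε * (∫ x : ℝ, deriv (deriv ρ) x * deriv (deriv u) x)
        + 1 * (∫ x : ℝ, deriv ρ x * deriv u x * deriv (deriv u) x)
        + ∫ x : ℝ, ρ x * (deriv (deriv u) x)^2 :=
    split ε 1 _ _ _ intA int2 int3
  -- second integration by parts: ∫ ρ'' u'' = - ∫ ρ' u'''
  have hB : (∫ x : ℝ, deriv (deriv ρ) x * deriv (deriv u) x)
      = - ∫ x : ℝ, deriv ρ x * deriv (deriv (deriv u)) x :=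
    ibp (deriv ρ) (deriv (deriv u)) (ρd1.of_le one_le_two) ud2 hρc.deriv
  -- compute the derivative in the second integral pointwise
  have hG : ∀ x : ℝ, deriv (fun y => ε * deriv (deriv u) y
        - (1/2) * (deriv u y)^2 + ρ y) x
      = ε * deriv (deriv (deriv u)) x - deriv u x * deriv (deriv u) x + deriv ρ x := by
    intro x
    have h1 : HasDerivAt (deriv (deriv u)) (deriv (deriv (deriv u)) x) x :=
      ((ud2.differentiable one_ne_zero) x).hasDerivAt
    have h2 : HasDerivAt (deriv u) (deriv (deriv u) x) x :=
      ((ud1.differentiable two_ne_zero) x).hasDerivAt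
    have h3 : HasDerivAt ρ (deriv ρ x) x := ((hρ.differentiable (by norm_num)) x).hasDerivAt
    have hd : HasDerivAt (fun y => ε * deriv (deriv u) y - (1/2) * (deriv u y)^2 + ρ y) _ x :=
      ((h1.const_mul ε).sub ((h2.pow 2).const_mul ((1:ℝ)/2))).add h3
    rw [hd.deriv]
    push_cast
    ring
  have hC : (∫ x : ℝ, deriv ρ x * deriv (fun y => ε * deriv (deriv u) y
        - (1/2) * (deriv u y)^2 + ρ y) x)
      = ε * (∫ x : ℝ, deriv ρ x * deriv (deriv (deriv u)) x)
        + (-1) * (∫ x : ℝ, deriv ρ x * deriv u x * deriv (deriv u) x)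
        + ∫ x : ℝ, (deriv ρ x)^2 := by
    rw [show (fun x => deriv ρ x * deriv (fun y => ε * deriv (deriv u) y
        - (1/2) * (deriv u y)^2 + ρ y) x)
      = fun x => (ε * (deriv ρ x * deriv (deriv (deriv u)) x)
          + (-1:ℝ) * (deriv ρ x * deriv u x * deriv (deriv u) x)
          + (deriv ρ x)^2) from funext (fun x => by rw [hG x]; ring)]
    exact split ε (-1) _ _ _ int1 int2 int4
  rw [hA, hA2, hA3, hB, hC, integral_add int4 int3]
  ring
end

section
/- Let ε ∈ ℝ, let ρ : ℝ → ℝ be twice continuously differentiable with compact support, and let u : ℝ → ℝ be twice continuously differentiable. Then ∫_ℝ (−ε ρ'' − (ρ u')')(x) · u(x) dx + ∫_ℝ ρ(x) · (ε u''(x) − (1/2) u'(x)² + ρ(x)) dx = ∫_ℝ [ρ(x)² + (1/2) ρ(x) u'(x)²] dx. -/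
open MeasureTheory

/-- Static form of the identity
`d/dt ∫ ρ u dx = ∫ ρ² + (1/2) ρ (∂ₓu)² dx` for the viscous MFG system. -/
theorem mfg_energy_identity (ε : ℝ) (ρ u : ℝ → ℝ)
    (hρ : ContDiff ℝ 2 ρ) (hρc : HasCompactSupport ρ)
    (hu : ContDiff ℝ 2 u) :
    (∫ x : ℝ, (-ε * deriv (deriv ρ) x - deriv (fun y => ρ y * deriv u y) x) * u x)
      + (∫ x : ℝ, ρ x * (ε * deriv (deriv u) x - (1/2) * (deriv u x)^2 + ρ x))
    = ∫ x : ℝ, ((ρ x)^2 + (1/2) * ρ x * (deriv u x)^2) := by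
  have h2 : (2 : WithTop ℕ∞) = 1 + 1 := by norm_num
  have hρ1 : ContDiff ℝ 1 (deriv ρ) := by
    rw [h2] at hρ; exact (contDiff_succ_iff_deriv.mp hρ).2.2
  have hu1 : ContDiff ℝ 1 (deriv u) := by
    rw [h2] at hu; exact (contDiff_succ_iff_deriv.mp hu).2.2
  have cρ : Continuous ρ := hρ.continuous
  have cu : Continuous u := hu.continuous
  have cρ' : Continuous (deriv ρ) := hρ1.continuous
  have cu' : Continuous (deriv u) := hu1.continuous
  have cρ'' : Continuous (deriv (deriv ρ)) := hρ1.continuous_deriv le_rfl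
  have cu'' : Continuous (deriv (deriv u)) := hu1.continuous_deriv le_rfl
  have hρd : ∀ x, HasDerivAt ρ (deriv ρ x) x := fun x =>
    ((hρ.differentiable (by norm_num)) x).hasDerivAt
  have hud : ∀ x, HasDerivAt u (deriv u x) x := fun x =>
    ((hu.differentiable (by norm_num)) x).hasDerivAt
  have hρd2 : ∀ x, HasDerivAt (deriv ρ) (deriv (deriv ρ) x) x := fun x =>
    ((hρ1.differentiable one_ne_zero) x).hasDerivAt
  have hud2 : ∀ x, HasDerivAt (deriv u) (deriv (deriv u) x) x := fun x =>
    ((hu1.differentiable one_ne_zero) x).hasDerivAt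
  have hρc' : HasCompactSupport (deriv ρ) := hρc.deriv
  have hρc'' : HasCompactSupport (deriv (deriv ρ)) := hρc'.deriv
  -- derivative of the product
  have hprod : ∀ x, HasDerivAt (fun y => ρ y * deriv u y)
      (deriv ρ x * deriv u x + ρ x * deriv (deriv u) x) x := fun x =>
    (hρd x).mul (hud2 x)
  have hDeq : deriv (fun y => ρ y * deriv u y)
      = fun x => deriv ρ x * deriv u x + ρ x * deriv (deriv u) x :=
    funext fun x => (hprod x).deriv
  -- integrability helpers
  have int_aux : ∀ (f : ℝ → ℝ), Continuous f → HasCompactSupport f → Integrable f :=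
    fun f hf hcf => hf.integrable_of_hasCompactSupport hcf
  have I_uρ'' : Integrable (fun x => u x * deriv (deriv ρ) x) :=
    int_aux _ (cu.mul cρ'') ((hρc''.mul_left (f := u)))
  have I_u'ρ' : Integrable (fun x => deriv u x * deriv ρ x) :=
    int_aux _ (cu'.mul cρ') (hρc'.mul_left (f := deriv u))
  have I_uρ' : Integrable (fun x => u x * deriv ρ x) :=
    int_aux _ (cu.mul cρ') (hρc'.mul_left (f := u))
  have I_u'ρ : Integrable (fun x => deriv u x * ρ x) :=
    int_aux _ (cu'.mul cρ) (hρc.mul_left (f := deriv u))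
  have I_u''ρ : Integrable (fun x => deriv (deriv u) x * ρ x) :=
    int_aux _ (cu''.mul cρ) (hρc.mul_left (f := deriv (deriv u)))
  have I_ρu'' : Integrable (fun x => ρ x * deriv (deriv u) x) :=
    int_aux _ (cρ.mul cu'') (hρc.mul_right (f' := deriv (deriv u)))
  have I_ρu'sq : Integrable (fun x => ρ x * (deriv u x)^2) :=
    int_aux _ (cρ.mul (cu'.pow 2)) (hρc.mul_right (f' := fun x => (deriv u x)^2))
  have I_ρsq : Integrable (fun x => (ρ x)^2) := by
    have h : (fun x => (ρ x)^2) = ρ * ρ := by funext x; simp [sq]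
    rw [h]; exact int_aux _ (cρ.mul cρ) (hρc.mul_right (f' := ρ))
  have hV : HasCompactSupport (fun y => ρ y * deriv u y) :=
    hρc.mul_right (f' := deriv u)
  have cV : Continuous (fun y => ρ y * deriv u y) := cρ.mul cu'
  have I_uV' : Integrable (fun x => u x * deriv (fun y => ρ y * deriv u y) x) := by
    rw [hDeq]
    exact int_aux _ (cu.mul ((cρ'.mul cu').add (cρ.mul cu'')))
      (((hρc'.mul_right (f' := deriv u)).add
        (hρc.mul_right (f' := deriv (deriv u)))).mul_left (f := u))
  have I_u'V : Integrable (fun x => deriv u x * (ρ x * deriv u x)) :=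
    int_aux _ (cu'.mul (cρ.mul cu')) ((hρc.mul_right (f' := deriv u)).mul_left (f := deriv u))
  have I_uV : Integrable (fun x => u x * (ρ x * deriv u x)) :=
    int_aux _ (cu.mul (cρ.mul cu')) ((hρc.mul_right (f' := deriv u)).mul_left (f := u))
  -- first integration by parts: ∫ u ρ'' = - ∫ u' ρ'
  have ibp1 : ∫ x, u x * deriv (deriv ρ) x = - ∫ x, deriv u x * deriv ρ x :=
    integral_mul_deriv_eq_deriv_mul_of_integrable (fun x _ => hud x) (fun x _ => hρd2 x) I_uρ'' I_u'ρ' I_uρ'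
  -- second: ∫ u' ρ' = - ∫ u'' ρ
  have ibp2 : ∫ x, deriv u x * deriv ρ x = - ∫ x, deriv (deriv u) x * ρ x :=
    integral_mul_deriv_eq_deriv_mul_of_integrable (fun x _ => hud2 x) (fun x _ => hρd x) I_u'ρ' I_u''ρ I_u'ρ
  -- third: ∫ u * (ρ u')' = - ∫ u' * (ρ u')
  have hprod' : ∀ x, HasDerivAt (fun y => ρ y * deriv u y)
      (deriv (fun y => ρ y * deriv u y) x) x := by
    intro x; rw [hDeq]; exact hprod x
  have ibp3 : ∫ x, u x * deriv (fun y => ρ y * deriv u y) x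
      = - ∫ x, deriv u x * (ρ x * deriv u x) :=
    integral_mul_deriv_eq_deriv_mul_of_integrable (fun x _ => hud x) (fun x _ => hprod' x) I_uV' I_u'V I_uV
  have key1 : ∫ x, u x * deriv (deriv ρ) x = ∫ x, ρ x * deriv (deriv u) x := by
    rw [ibp1, ibp2, neg_neg]
    apply integral_congr_ae; filter_upwards with x; ring
  have key2 : ∫ x, u x * deriv (fun y => ρ y * deriv u y) x
      = - ∫ x, ρ x * (deriv u x)^2 := by
    rw [ibp3]; congr 1
    apply integral_congr_ae; filter_upwards with x; ring
  -- split all the integrals and conclude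
  have e1 : (fun x => (-ε * deriv (deriv ρ) x - deriv (fun y => ρ y * deriv u y) x) * u x)
      = (fun x => (-ε) * (u x * deriv (deriv ρ) x)
          - u x * deriv (fun y => ρ y * deriv u y) x) := by
    funext x; ring
  have e2 : (fun x => ρ x * (ε * deriv (deriv u) x - (1/2) * (deriv u x)^2 + ρ x))
      = (fun x => (ε * (ρ x * deriv (deriv u) x) - (1/2) * (ρ x * (deriv u x)^2))
          + (ρ x)^2) := by
    funext x; ring
  have e3 : (fun x : ℝ => (ρ x)^2 + (1/2) * ρ x * (deriv u x)^2)
      = (fun x => (ρ x)^2 + (1/2) * (ρ x * (deriv u x)^2)) := by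
    funext x; ring
  rw [e1, e2, e3,
    integral_sub (I_uρ''.const_mul (-ε)) I_uV',
    integral_add (f := fun x => ε * (ρ x * deriv (deriv u) x) - 1/2 * (ρ x * deriv u x ^ 2))
      (g := fun x => (ρ x)^2)
      ((I_ρu''.const_mul ε).sub (I_ρu'sq.const_mul (1/2))) I_ρsq,
    integral_sub (I_ρu''.const_mul ε) (I_ρu'sq.const_mul (1/2)),
    integral_add I_ρsq (I_ρu'sq.const_mul (1/2))]
  simp only [integral_const_mul]
  rw [key1, key2]
  ring
end

section
/- Let T > 0, let y : [0, T] → ℝ be differentiable with y(t) ≥ 0 for all t and y(0) = 0, and let g : [0, T] → ℝ be continuous with g ≥ 0. Assume y'(t) ≤ 2 √(y(t)) · g(t) for all t ∈ [0, T]. Then for every t ∈ [0, T], y(t) ≤ (∫_0^t g(s) ds)², and consequently y(t) ≤ t · ∫_0^t g(s)² ds. -/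
open MeasureTheory

/-- Square-root Grönwall lemma: if `y ≥ 0`, `y 0 = 0` and
`y' ≤ 2 √y · g` on `[0,T]`, then `y t ≤ (∫₀ᵗ g)²` and `y t ≤ t ∫₀ᵗ g²`. -/
theorem sqrt_gronwall (T : ℝ) (hT : 0 < T) (y g : ℝ → ℝ)
    (hy : ∀ t ∈ Set.Icc (0:ℝ) T, DifferentiableAt ℝ y t)
    (hynn : ∀ t ∈ Set.Icc (0:ℝ) T, 0 ≤ y t)
    (hy0 : y 0 = 0)
    (hg : ContinuousOn g (Set.Icc (0:ℝ) T))
    (hgnn : ∀ t ∈ Set.Icc (0:ℝ) T, 0 ≤ g t)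
    (hineq : ∀ t ∈ Set.Icc (0:ℝ) T, deriv y t ≤ 2 * Real.sqrt (y t) * g t) :
    ∀ t ∈ Set.Icc (0:ℝ) T,
      y t ≤ (∫ s in (0:ℝ)..t, g s)^2 ∧ y t ≤ t * ∫ s in (0:ℝ)..t, (g s)^2 := by
  -- continuous extension of g to all of ℝ
  set gt : ℝ → ℝ := fun s => g (Set.projIcc 0 T hT.le s) with hgt_def
  have hgtc : Continuous gt :=
    hg.comp_continuous (continuous_subtype_val.comp continuous_projIcc)
      (fun x => (Set.projIcc 0 T hT.le x).2)
  have hgt_eq : ∀ s ∈ Set.Icc (0:ℝ) T, gt s = g s := by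
    intro s hs
    simp [hgt_def, Set.projIcc_of_mem hT.le hs]
  have hgtnn : ∀ s, 0 ≤ gt s := fun s => hgnn _ (Set.projIcc 0 T hT.le s).2
  set G : ℝ → ℝ := fun u => ∫ s in (0:ℝ)..u, gt s with hG_def
  have hG : ∀ u, HasDerivAt G (gt u) u := by
    intro u
    exact intervalIntegral.integral_hasDerivAt_right (hgtc.intervalIntegrable _ _)
      hgtc.aestronglyMeasurable.stronglyMeasurableAtFilter hgtc.continuousAt
  have hGnn : ∀ u, 0 ≤ u → 0 ≤ G u := by
    intro u hu
    exact intervalIntegral.integral_nonneg hu (fun s _ => hgtnn s)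
  -- Step 1: for each ε > 0, y ≤ (G + ε(1+·))² on [0,T]
  have key : ∀ ε > (0:ℝ), ∀ t ∈ Set.Icc (0:ℝ) T, y t ≤ (G t + ε * (1 + t))^2 := by
    intro ε hε
    have hB : ∀ u, HasDerivAt (fun u => (G u + ε * (1 + u))^2)
        (2 * (G u + ε * (1 + u)) * (gt u + ε)) u := by
      intro u
      have h1 : HasDerivAt (fun u => G u + ε * (1 + u)) (gt u + ε) u := by
        have := ((hasDerivAt_id u).const_add (1:ℝ)).const_mul ε
        exact (hG u).add (by simpa using this)
      have := h1.fun_pow 2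
      refine this.congr_deriv ?_
      ring
    refine image_le_of_deriv_right_lt_deriv_boundary
      (f := y) (f' := deriv y) (a := 0) (b := T)
      (fun s hs => (hy s hs).continuousAt.continuousWithinAt)
      (fun x hx => ((hy x (Set.Ico_subset_Icc_self hx)).hasDerivAt).hasDerivWithinAt)
      ?_ hB ?_
    · -- y 0 ≤ B 0
      rw [hy0]
      positivity
    · intro x hx heq
      have hx' : x ∈ Set.Icc (0:ℝ) T := Set.Ico_subset_Icc_self hx
      have hpos : 0 < G x + ε * (1 + x) := by
        have := hGnn x hx.1
        nlinarith [hx.1]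
      have hsqrt : Real.sqrt (y x) = G x + ε * (1 + x) := by
        rw [heq, Real.sqrt_sq hpos.le]
      calc deriv y x ≤ 2 * Real.sqrt (y x) * g x := hineq x hx'
        _ = 2 * (G x + ε * (1 + x)) * g x := by rw [hsqrt]
        _ < 2 * (G x + ε * (1 + x)) * (g x + ε) := by nlinarith
        _ = 2 * (G x + ε * (1 + x)) * (gt x + ε) := by rw [hgt_eq x hx']
  intro t ht
  -- pass to the limit ε → 0 : √(y t) ≤ G t
  have hsqrt_le : Real.sqrt (y t) ≤ G t := by
    have h1t : (0:ℝ) < 1 + t := by linarith [ht.1]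
    refine le_of_forall_pos_le_add (fun δ hδ => ?_)
    have hε : (0:ℝ) < δ / (1 + t) := div_pos hδ h1t
    have := key _ hε t ht
    have h2 : Real.sqrt (y t) ≤ G t + δ / (1 + t) * (1 + t) := by
      have hnn : 0 ≤ G t + δ / (1 + t) * (1 + t) := by
        have := hGnn t ht.1
        positivity
      calc Real.sqrt (y t) ≤ Real.sqrt ((G t + δ / (1 + t) * (1 + t))^2) :=
            Real.sqrt_le_sqrt this
        _ = G t + δ / (1 + t) * (1 + t) := Real.sqrt_sq hnn
    rwa [div_mul_cancel₀ _ h1t.ne'] at h2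
  have hyG : y t ≤ (G t)^2 := by
    have := pow_le_pow_left₀ (Real.sqrt_nonneg _) hsqrt_le 2
    rwa [Real.sq_sqrt (hynn t ht)] at this
  have hGg : G t = ∫ s in (0:ℝ)..t, g s := by
    refine intervalIntegral.integral_congr (fun s hs => ?_)
    rw [Set.uIcc_of_le ht.1] at hs
    exact hgt_eq s ⟨hs.1, hs.2.trans ht.2⟩
  -- Step 2: Cauchy–Schwarz by monotonicity
  set H : ℝ → ℝ := fun u => ∫ s in (0:ℝ)..u, (gt s)^2 with hH_def
  have hgt2c : Continuous (fun s => (gt s)^2) := hgtc.pow 2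
  have hH : ∀ u, HasDerivAt H ((gt u)^2) u := by
    intro u
    exact intervalIntegral.integral_hasDerivAt_right (hgt2c.intervalIntegrable _ _)
      hgt2c.aestronglyMeasurable.stronglyMeasurableAtFilter hgt2c.continuousAt
  set φ : ℝ → ℝ := fun u => u * H u - (G u)^2 with hφ_def
  have hφ' : ∀ u, HasDerivAt φ (H u + u * (gt u)^2 - 2 * G u * gt u) u := by
    intro u
    have h1 : HasDerivAt (fun u => u * H u) (H u + u * (gt u)^2) u := by
      have := (hasDerivAt_id u).fun_mul (hH u)
      simpa [add_comm] using this
    have h2 : HasDerivAt (fun u => (G u)^2) (2 * G u * gt u) u := by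
      have := (hG u).fun_pow 2
      refine this.congr_deriv ?_; ring
    exact h1.sub h2
  have hφnn : ∀ u ∈ Set.Ioo (0:ℝ) T, 0 ≤ H u + u * (gt u)^2 - 2 * G u * gt u := by
    intro u hu
    have hmono : (∫ s in (0:ℝ)..u, 2 * gt u * gt s) ≤
        ∫ s in (0:ℝ)..u, ((gt s)^2 + (gt u)^2) := by
      refine intervalIntegral.integral_mono_on hu.1.le
        ((continuous_const.mul hgtc).intervalIntegrable _ _)
        ((hgt2c.add continuous_const).intervalIntegrable _ _) (fun s _ => ?_)
      nlinarith [sq_nonneg (gt s - gt u)]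
    rw [intervalIntegral.integral_const_mul,
      intervalIntegral.integral_add (hgt2c.intervalIntegrable _ _)
        (continuous_const.intervalIntegrable _ _),
      intervalIntegral.integral_const] at hmono
    simp only [smul_eq_mul, sub_zero] at hmono
    have : 2 * gt u * G u ≤ H u + u * (gt u)^2 := by
      simpa [hG_def, hH_def] using hmono
    linarith
  have hmonoφ : MonotoneOn φ (Set.Icc 0 T) := by
    refine monotoneOn_of_deriv_nonneg (convex_Icc 0 T)
      (fun u _ => (hφ' u).continuousAt.continuousWithinAt)
      (fun u hu => ((hφ' u).differentiableAt).differentiableWithinAt) (fun u hu => ?_)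
    rw [interior_Icc] at hu
    rw [(hφ' u).deriv]
    exact hφnn u hu
  have hφ0 : φ 0 = 0 := by simp [hφ_def, hH_def, hG_def]
  have hφt : 0 ≤ φ t := by
    have := hmonoφ (Set.left_mem_Icc.2 hT.le) ht ht.1
    rwa [hφ0] at this
  have hCS : (G t)^2 ≤ t * H t := by
    simp only [hφ_def] at hφt; linarith
  have hHg : H t = ∫ s in (0:ℝ)..t, (g s)^2 := by
    refine intervalIntegral.integral_congr (fun s hs => ?_)
    rw [Set.uIcc_of_le ht.1] at hs
    rw [hgt_eq s ⟨hs.1, hs.2.trans ht.2⟩]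
  constructor
  · rw [← hGg]; exact hyG
  · rw [← hHg]
    calc y t ≤ (G t)^2 := hyG
      _ ≤ t * H t := hCS
end

section
/- Let m > 2, C > 0, and let a : (0, 1/2] → [0, ∞) be measurable. Assume that for all h, h' with 0 < h < h' ≤ 1/2 one has ∫_h^{h'} a(s)^m ds ≤ C/(h' − h). Then ∫_0^{1/2} a(s) ds ≤ C^{1/m} / (2^{(m−2)/m} − 1); in particular ∫_0^{1/2} a(s) ds is finite. -/
open MeasureTheory

/-- Dyadic summation lemma: if `∫_h^{h'} a^m ≤ C/(h'-h)` for all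
`0 < h < h' ≤ 1/2` and `m > 2`, then `∫_0^{1/2} a ≤ C^{1/m}/(2^{(m-2)/m} - 1)`;
in particular the integral is finite. -/
theorem dyadic_integrability_lemma (m C : ℝ) (hm : 2 < m) (hC : 0 < C)
    (a : ℝ → ℝ) (ha : Measurable a)
    (hann : ∀ s ∈ Set.Ioc (0:ℝ) (1/2), 0 ≤ a s)
    (hbound : ∀ h h' : ℝ, 0 < h → h < h' → h' ≤ 1/2 →
      (∫⁻ s in Set.Ioc h h', ENNReal.ofReal (a s ^ m))
        ≤ ENNReal.ofReal (C / (h' - h))) :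
    (∫⁻ s in Set.Ioc (0:ℝ) (1/2), ENNReal.ofReal (a s))
      ≤ ENNReal.ofReal (C ^ (1/m) / ((2:ℝ) ^ ((m-2)/m) - 1)) := by
  have hm0 : (0:ℝ) < m := by linarith
  set θ : ℝ := (m - 2) / m with hθdef
  have hθ0 : 0 < θ := div_pos (by linarith) hm0
  set c : ℝ := (1/2 : ℝ) ^ θ with hcdef
  have hc0 : 0 < c := Real.rpow_pos_of_pos (by norm_num) _
  have hc1 : c < 1 := Real.rpow_lt_one (by norm_num) (by norm_num) hθ0
  -- dyadic intervals
  have hpowpos : ∀ n : ℕ, (0:ℝ) < (1/2 : ℝ) ^ n := fun n => pow_pos (by norm_num) n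
  have hpowle : ∀ n : ℕ, (1/2 : ℝ) ^ (n+1) ≤ 1/2 := fun n => by
    calc (1/2 : ℝ) ^ (n+1) ≤ (1/2:ℝ) ^ 1 :=
          pow_le_pow_of_le_one (by norm_num) (by norm_num) (by omega)
      _ = 1/2 := pow_one _
  -- inclusion into the union of dyadic intervals
  have hsub : Set.Ioc (0:ℝ) (1/2) ⊆
      ⋃ n : ℕ, Set.Ioc ((1/2:ℝ) ^ (n+2)) ((1/2:ℝ) ^ (n+1)) := by
    intro s hs
    obtain ⟨hs0, hs2⟩ := hs
    have hex : ∃ k : ℕ, (1/2:ℝ) ^ (k+2) < s := by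
      obtain ⟨k, hk⟩ := exists_pow_lt_of_lt_one hs0 (by norm_num : (1/2:ℝ) < 1)
      exact ⟨k, lt_of_le_of_lt
        (pow_le_pow_of_le_one (by norm_num) (by norm_num) (by omega)) hk⟩
    have hn : (1/2:ℝ) ^ (Nat.find hex + 2) < s := Nat.find_spec hex
    refine Set.mem_iUnion.2 ⟨Nat.find hex, hn, ?_⟩
    rcases Nat.eq_zero_or_pos (Nat.find hex) with h0 | hpos
    · rw [h0]; simpa using hs2
    · have hk1 : Nat.find hex - 1 < Nat.find hex := by omega
      have := Nat.find_min hex hk1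
      push_neg at this
      have heq : Nat.find hex - 1 + 2 = Nat.find hex + 1 := by omega
      rwa [heq] at this
  -- the key per-interval bound
  have key : ∀ n : ℕ,
      (∫⁻ s in Set.Ioc ((1/2:ℝ) ^ (n+2)) ((1/2:ℝ) ^ (n+1)), ENNReal.ofReal (a s))
        ≤ ENNReal.ofReal (C ^ (1/m) * c ^ (n+2)) := by
    intro n
    set h : ℝ := (1/2:ℝ) ^ (n+2) with hhdef
    set h' : ℝ := (1/2:ℝ) ^ (n+1) with hh'def
    have hhpos : 0 < h := hpowpos _
    have hhlt : h < h' := by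
      rw [hhdef, hh'def, pow_succ]
      nlinarith [hpowpos (n+1)]
    have hh'le : h' ≤ 1/2 := hpowle n
    have hlen : h' - h = (1/2:ℝ) ^ (n+2) := by
      rw [hhdef, hh'def, pow_succ]; ring
    have hlenpos : 0 < h' - h := by linarith
    have hsubset : Set.Ioc h h' ⊆ Set.Ioc (0:ℝ) (1/2) := fun x hx =>
      ⟨lt_trans hhpos hx.1, hx.2.trans hh'le⟩
    set μ := (volume : Measure ℝ).restrict (Set.Ioc h h') with hμ
    have hμIoc : μ Set.univ = ENNReal.ofReal (h' - h) := by
      rw [hμ, Measure.restrict_apply_univ, Real.volume_Ioc]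
    have hq : m.HolderConjugate (m / (m-1)) :=
      Real.HolderConjugate.conjExponent (by linarith)
    have hf : AEMeasurable (fun s => ENNReal.ofReal (a s)) μ :=
      (ENNReal.measurable_ofReal.comp ha).aemeasurable
    have hg : AEMeasurable (fun _ : ℝ => (1:ENNReal)) μ := aemeasurable_const
    have holder := ENNReal.lintegral_mul_le_Lp_mul_Lq μ hq hf hg
    simp only [Pi.mul_apply, mul_one, ENNReal.one_rpow, lintegral_const, one_mul] at holder
    rw [hμIoc] at holder
    -- rewrite the m-power integral
    have hcongr : (∫⁻ s, (ENNReal.ofReal (a s)) ^ m ∂μ)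
        = ∫⁻ s in Set.Ioc h h', ENNReal.ofReal (a s ^ m) := by
      rw [hμ]
      refine setLIntegral_congr_fun measurableSet_Ioc ?_
      intro x hx
      dsimp only
      rw [← ENNReal.ofReal_rpow_of_nonneg (hann x (hsubset hx)) hm0.le]
    have hbd : (∫⁻ s, (ENNReal.ofReal (a s)) ^ m ∂μ)
        ≤ ENNReal.ofReal (C / (h' - h)) := by
      rw [hcongr]; exact hbound h h' hhpos hhlt hh'le
    have hmono : (∫⁻ s, (ENNReal.ofReal (a s)) ^ m ∂μ) ^ (1/m)
        ≤ (ENNReal.ofReal (C / (h' - h))) ^ (1/m) :=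
      ENNReal.rpow_le_rpow hbd (by positivity)
    have hchain : (∫⁻ s, ENNReal.ofReal (a s) ∂μ)
        ≤ (ENNReal.ofReal (C / (h' - h))) ^ (1/m)
            * (ENNReal.ofReal (h' - h)) ^ (1/(m/(m-1))) :=
      holder.trans (mul_le_mul_left hmono _)
    refine hchain.trans (le_of_eq ?_)
    rw [ENNReal.ofReal_rpow_of_pos (div_pos hC hlenpos),
      ENNReal.ofReal_rpow_of_pos hlenpos, ← ENNReal.ofReal_mul (by positivity)]
    congr 1
    have h1q : 1/(m/(m-1)) = (m-1)/m := by field_simp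
    rw [h1q, Real.div_rpow hC.le hlenpos.le, hlen]
    have hxp : ((1/2:ℝ) ^ (n+2 : ℕ)) ^ ((m-1)/m)
        = ((1/2:ℝ) ^ (n+2 : ℕ)) ^ (1/m) * c ^ (n+2 : ℕ) := by
      rw [← Real.rpow_natCast (1/2 : ℝ) (n+2), ← Real.rpow_mul (by norm_num),
        ← Real.rpow_mul (by norm_num), hcdef, ← Real.rpow_natCast ((1/2:ℝ) ^ θ) (n+2),
        ← Real.rpow_mul (by norm_num), ← Real.rpow_add (by norm_num)]
      congr 1
      push_cast
      rw [hθdef]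
      field_simp
      ring
    rw [hxp]
    have hne : ((1/2:ℝ) ^ (n+2 : ℕ)) ^ (1/m) ≠ 0 := by positivity
    field_simp
  -- assemble
  calc (∫⁻ s in Set.Ioc (0:ℝ) (1/2), ENNReal.ofReal (a s))
      ≤ ∫⁻ s in ⋃ n : ℕ, Set.Ioc ((1/2:ℝ) ^ (n+2)) ((1/2:ℝ) ^ (n+1)),
          ENNReal.ofReal (a s) := lintegral_mono_set hsub
    _ ≤ ∑' n : ℕ, ∫⁻ s in Set.Ioc ((1/2:ℝ) ^ (n+2)) ((1/2:ℝ) ^ (n+1)),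
          ENNReal.ofReal (a s) := lintegral_iUnion_le _ _
    _ ≤ ∑' n : ℕ, ENNReal.ofReal (C ^ (1/m) * c ^ (n+2)) := ENNReal.tsum_le_tsum key
    _ = ENNReal.ofReal (∑' n : ℕ, C ^ (1/m) * c ^ (n+2)) := by
        rw [ENNReal.ofReal_tsum_of_nonneg]
        · intro n; positivity
        · have : Summable (fun n : ℕ => c ^ n) :=
            summable_geometric_of_lt_one hc0.le hc1
          exact ((this.mul_left (C ^ (1/m) * c ^ 2)).congr (fun n => by ring))
    _ ≤ ENNReal.ofReal (C ^ (1/m) / ((2:ℝ) ^ ((m-2)/m) - 1)) := by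
        apply ENNReal.ofReal_le_ofReal
        have hsum : (∑' n : ℕ, C ^ (1/m) * c ^ (n+2))
            = C ^ (1/m) * c ^ 2 * (1 - c)⁻¹ := by
          rw [tsum_congr (fun n => by ring :
              ∀ n : ℕ, C ^ (1/m) * c ^ (n+2) = (C ^ (1/m) * c ^ 2) * c ^ n),
            tsum_mul_left, tsum_geometric_of_lt_one hc0.le hc1]
        rw [hsum]
        have h2θ : (2:ℝ) ^ ((m-2)/m) = c⁻¹ := by
          rw [hcdef, ← hθdef, one_div, Real.inv_rpow (by norm_num), inv_inv]
        rw [h2θ]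
        have hub : c⁻¹ - 1 = (1 - c) / c := by field_simp
        rw [hub, div_div_eq_mul_div, div_eq_mul_inv (C ^ (1/m) * c)]
        have h1c : 0 < 1 - c := by linarith
        have hP : (0:ℝ) ≤ C ^ (1/m) := by positivity
        exact mul_le_mul_of_nonneg_right
          (mul_le_mul_of_nonneg_left (by nlinarith) hP) (inv_nonneg.2 h1c.le)
end

section
/- Let r, k, a : (0,1) → ℝ be differentiable with r(t) > 0 for all t ∈ (0,1), and set l(t) = 3/(4 r(t)). Assume that on (0,1): k' = r, r' = −r·a, and a' = −(a² + (32/9) r³). Define ū(x,t) = k(t) + (1/2) a(t) x² and ρ̄(x,t) = r(t)(1 − x²/l(t)²). Then for every t ∈ (0,1) and every x ∈ ℝ with |x| < l(t), the pair (ū, ρ̄) satisfies ∂_t ū(x,t) + (1/2)(∂_x ū(x,t))² = ρ̄(x,t) and ∂_t ρ̄(x,t) + ∂_x(ρ̄ ∂_x ū)(x,t) = 0. -/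
/-- The 'physics solution' (a quadratic `ū` and a parabolic profile `ρ̄`)
solves the first-order planning MFG system in the interior region `|x| < l t`,
given the ODEs for `(k, r, a)`. -/
theorem physics_solution_solves_planning (r k a : ℝ → ℝ)
    (hrdiff : ∀ t ∈ Set.Ioo (0:ℝ) 1, DifferentiableAt ℝ r t)
    (hkdiff : ∀ t ∈ Set.Ioo (0:ℝ) 1, DifferentiableAt ℝ k t)
    (hadiff : ∀ t ∈ Set.Ioo (0:ℝ) 1, DifferentiableAt ℝ a t)
    (hrpos : ∀ t ∈ Set.Ioo (0:ℝ) 1, 0 < r t)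
    (hk' : ∀ t ∈ Set.Ioo (0:ℝ) 1, deriv k t = r t)
    (hr' : ∀ t ∈ Set.Ioo (0:ℝ) 1, deriv r t = -(r t * a t))
    (ha' : ∀ t ∈ Set.Ioo (0:ℝ) 1, deriv a t = -((a t)^2 + 32/9 * (r t)^3))
    (l : ℝ → ℝ) (hl : ∀ t, l t = 3 / (4 * r t))
    (u ρ : ℝ → ℝ → ℝ)
    (hu : ∀ x t, u x t = k t + (1/2) * a t * x^2)
    (hρ : ∀ x t, ρ x t = r t * (1 - x^2 / (l t)^2)) :
    ∀ t ∈ Set.Ioo (0:ℝ) 1, ∀ x : ℝ, |x| < l t →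
      (deriv (fun s => u x s) t + (1/2) * (deriv (fun y => u y t) x)^2 = ρ x t) ∧
      (deriv (fun s => ρ x s) t
        + deriv (fun y => ρ y t * deriv (fun z => u z t) y) x = 0) := by
  intro t ht x hxl
  have hrt := hrpos t ht
  have hrne : r t ≠ 0 := ne_of_gt hrt
  have hρfun : ∀ z : ℝ, (fun s => ρ z s) = fun s => r s - 16/9 * (r s)^3 * z^2 := by
    intro z; funext s
    rw [hρ, hl]
    rcases eq_or_ne (r s) 0 with h | h
    · simp [h]
    · field_simp
      ring
  -- derivative of u in x
  have hdux : ∀ y : ℝ, deriv (fun z => u z t) y = a t * y := by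
    intro y
    have heq : (fun z => u z t) = fun z => k t + (1/2) * a t * z^2 :=
      funext fun z => hu z t
    rw [heq]
    have h1 : HasDerivAt (fun z : ℝ => z^2) (2*y) y := by
      simpa using (hasDerivAt_pow 2 y)
    have h2 := (h1.const_mul ((1:ℝ)/2 * a t)).const_add (k t)
    have h3 : HasDerivAt (fun z : ℝ => k t + (1/2) * a t * z^2) (a t * y) y := by
      exact h2.congr_deriv (by ring)
    exact h3.deriv
  -- derivative of u in t
  have hdut : deriv (fun s => u x s) t = deriv k t + (1/2) * deriv a t * x^2 := by
    have heq : (fun s => u x s) = fun s => k s + (1/2) * a s * x^2 :=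
      funext fun s => hu x s
    rw [heq]
    have h2 : HasDerivAt (fun s => (1/2 : ℝ) * a s * x^2)
        ((1/2) * deriv a t * x^2) t :=
      (((hadiff t ht).hasDerivAt.const_mul (1/2 : ℝ)).mul_const (x^2))
    exact ((hkdiff t ht).hasDerivAt.add h2).deriv
  -- derivative of ρ in t
  have hdρt : deriv (fun s => ρ x s) t
      = deriv r t - 16/9 * (3 * (r t)^2 * deriv r t) * x^2 := by
    rw [hρfun x]
    have h1 : HasDerivAt (fun s => (r s)^3) (3 * (r t)^2 * deriv r t) t := by
      have := (hrdiff t ht).hasDerivAt.fun_pow 3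
      simpa [mul_comm, mul_assoc, mul_left_comm] using this
    have h2 := ((h1.const_mul ((16:ℝ)/9)).mul_const (x^2))
    exact ((hrdiff t ht).hasDerivAt.sub h2).deriv
  -- derivative of the flux in x
  have hflux : deriv (fun y => ρ y t * deriv (fun z => u z t) y) x
      = r t * a t - 16/3 * (r t)^3 * a t * x^2 := by
    have heq : (fun y => ρ y t * deriv (fun z => u z t) y)
        = fun y => r t * a t * y - 16/9 * (r t)^3 * a t * y^3 := by
      funext y
      rw [hdux y, hρ, hl]
      field_simp
      ring
    rw [heq]
    have h1 : HasDerivAt (fun y : ℝ => r t * a t * y) (r t * a t) x := by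
      simpa using (hasDerivAt_id x).const_mul (r t * a t)
    have h3 : HasDerivAt (fun y : ℝ => y^3) (3 * x^2) x := by
      simpa using hasDerivAt_pow 3 x
    have h2 := h3.const_mul ((16:ℝ)/9 * (r t)^3 * a t)
    have h4 : HasDerivAt (fun y : ℝ => 16/9 * (r t)^3 * a t * y^3)
        (16/3 * (r t)^3 * a t * x^2) x := by
      exact h2.congr_deriv (by ring)
    exact (h1.sub h4).deriv
  constructor
  · rw [hdut, hdux x, hρ, hl, hk' t ht, ha' t ht]
    field_simp
    ring
  · rw [hdρt, hflux, hr' t ht]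
    ring
end

section
/- Let ε ∈ ℝ, T > 0, and let b : (0,T) → (0, ∞) be differentiable. Define p(x,s) = (2s)^{−1/2} exp(−x²/(4s)) for s > 0, and set ρ(x,t) = p(x, b(t)) and a(x,t) = ((b'(t) + ε)/(2 b(t))) · x. Then for every (x,t) ∈ ℝ × (0,T): ∂_t ρ(x,t) + ε ∂²_x ρ(x,t) + ∂_x(ρ a)(x,t) = 0. -/
noncomputable def Pker (x s : ℝ) : ℝ := (2*s) ^ (-(1/2) : ℝ) * Real.exp (-x^2 / (4*s))

lemma Pker_hasDerivAt_x (s : ℝ) (hs : 0 < s) (x : ℝ) :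
    HasDerivAt (fun y => Pker y s) (Pker x s * (-x / (2*s))) x := by
  have h1 : (fun y : ℝ => -y^2/(4*s)) = fun y => (-(1/(4*s))) * y^2 := by
    funext y; ring
  have h2 : HasDerivAt (fun y : ℝ => -y^2/(4*s)) (-x/(2*s)) x := by
    rw [h1]
    have := (hasDerivAt_pow 2 x).const_mul (-(1/(4*s)))
    convert (config := { transparency := .default, preTransparency := .default }) this using 1
    field_simp; ring
  have h3 := (h2.exp).const_mul ((2*s) ^ (-(1/2) : ℝ))
  convert (config := { transparency := .default, preTransparency := .default }) h3 using 1
  simp only [Pker]; ring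

lemma Pker_hasDerivAt_xx (s : ℝ) (hs : 0 < s) (x : ℝ) :
    HasDerivAt (fun y => Pker y s * (-y / (2*s)))
      (Pker x s * (x^2/(4*s^2) - 1/(2*s))) x := by
  have hg : HasDerivAt (fun y : ℝ => -y / (2*s)) (-1/(2*s)) x := by
    have := (hasDerivAt_id x).const_mul (-1/(2*s))
    convert (config := { transparency := .default, preTransparency := .default }) this using 1
    · funext y; simp only [id]; ring
    · ring
  have := (Pker_hasDerivAt_x s hs x).mul hg
  convert (config := { transparency := .default, preTransparency := .default }) this using 1
  have hs' : (s:ℝ) ≠ 0 := ne_of_gt hs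
  field_simp
  ring

lemma Pker_hasDerivAt_s (x s : ℝ) (hs : 0 < s) :
    HasDerivAt (fun u => Pker x u) (Pker x s * (x^2/(4*s^2) - 1/(2*s))) s := by
  have h2s : (0:ℝ) < 2*s := by linarith
  have hmul : HasDerivAt (fun u : ℝ => 2*u) 2 s := by
    simpa using (hasDerivAt_id s).const_mul (2:ℝ)
  have hA : HasDerivAt (fun u : ℝ => (2*u) ^ (-(1/2) : ℝ))
      ((-(1/2)) * (2*s) ^ ((-(1/2) : ℝ) - 1) * 2) s := by
    have h := (Real.hasDerivAt_rpow_const (x := 2*s) (p := -(1/2))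
      (Or.inl (ne_of_gt h2s))).comp s hmul
    convert (config := { transparency := .default, preTransparency := .default }) h using 1
  have hinner : HasDerivAt (fun u : ℝ => -x^2/(4*u)) (x^2/(4*s^2)) s := by
    have h1 : (fun u : ℝ => -x^2/(4*u)) = fun u => (-x^2/4) * u⁻¹ := by
      funext u; ring
    rw [h1]
    have := (hasDerivAt_inv (ne_of_gt hs)).const_mul (-x^2/4)
    convert (config := { transparency := .default, preTransparency := .default }) this using 1
    field_simp
  have hE := hinner.exp
  have := hA.mul hE
  convert (config := { transparency := .default, preTransparency := .default }) this using 1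
  have hrw : (2*s) ^ ((-(1/2) : ℝ) - 1) = (2*s) ^ (-(1/2) : ℝ) / (2*s) := by
    rw [Real.rpow_sub h2s, Real.rpow_one]
  rw [hrw]
  simp only [Pker]
  have hs' : (s:ℝ) ≠ 0 := ne_of_gt hs
  field_simp
  ring

/-- A time-changed Gaussian `ρ(x,t) = p(x, b(t))` with linear drift
`a(x,t) = ((b'(t)+ε)/(2b(t))) x` solves the Fokker–Planck constraint
`∂ₜρ + ε ∂ₓ²ρ + ∂ₓ(ρ a) = 0`, where `p(x,s) = (2s)^{-1/2} e^{-x²/(4s)}`. -/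
theorem gaussian_competitor_solves_fokker_planck (ε T : ℝ) (hT : 0 < T)
    (b : ℝ → ℝ)
    (hbpos : ∀ t ∈ Set.Ioo (0:ℝ) T, 0 < b t)
    (hbdiff : ∀ t ∈ Set.Ioo (0:ℝ) T, DifferentiableAt ℝ b t)
    (p : ℝ → ℝ → ℝ)
    (hp : ∀ x s : ℝ, p x s = (2*s) ^ (-(1/2) : ℝ) * Real.exp (-x^2 / (4*s)))
    (ρ a : ℝ → ℝ → ℝ)
    (hρ : ∀ x t : ℝ, ρ x t = p x (b t))
    (ha : ∀ x t : ℝ, a x t = ((deriv b t + ε) / (2 * b t)) * x) :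
    ∀ t ∈ Set.Ioo (0:ℝ) T, ∀ x : ℝ,
      deriv (fun s => ρ x s) t + ε * deriv (deriv (fun y => ρ y t)) x
        + deriv (fun y => ρ y t * a y t) x = 0 := by
  intro t ht x
  set s := b t with hsdef
  have hs : 0 < s := hbpos t ht
  have hs' : s ≠ 0 := ne_of_gt hs
  set B := deriv b t with hB
  set c : ℝ := (B + ε) / (2 * s) with hc
  -- identify the functions with Pker
  have hpP : ∀ y u : ℝ, p y u = Pker y u := by
    intro y u; rw [hp]; rfl
  -- time derivative
  have hDt : deriv (fun u => ρ x u) t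
      = Pker x s * (x^2/(4*s^2) - 1/(2*s)) * B := by
    have hfun : (fun u => ρ x u) = fun u => Pker x (b u) := by
      funext u; rw [hρ, hpP]
    rw [hfun]
    exact ((Pker_hasDerivAt_s x s hs).comp t (hbdiff t ht).hasDerivAt).deriv
  -- space function
  have hxfun : (fun y => ρ y t) = fun y => Pker y s := by
    funext y; rw [hρ, hpP]
  -- first space derivative as a function
  have hD1 : deriv (fun y => ρ y t) = fun y => Pker y s * (-y / (2*s)) := by
    rw [hxfun]; funext y; exact (Pker_hasDerivAt_x s hs y).deriv
  -- second space derivative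
  have hDxx : deriv (deriv (fun y => ρ y t)) x
      = Pker x s * (x^2/(4*s^2) - 1/(2*s)) := by
    rw [hD1]; exact (Pker_hasDerivAt_xx s hs x).deriv
  -- drift term
  have hDa : deriv (fun y => ρ y t * a y t) x
      = Pker x s * (-x / (2*s)) * (c * x) + Pker x s * c := by
    have hfun : (fun y => ρ y t * a y t) = fun y => Pker y s * (c * y) := by
      funext y; rw [hρ, hpP, ha]
    rw [hfun]
    have hg : HasDerivAt (fun y : ℝ => c * y) c x := by
      simpa using (hasDerivAt_id x).const_mul c
    exact ((Pker_hasDerivAt_x s hs x).mul hg).deriv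
  rw [hDt, hDxx, hDa, hc]
  field_simp
  ring
end
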